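/- Let λ ∈ Pℓk and z ∈ [b_λ], and set μ := λ − ε_z ∈ P̃ℓk. Then L_z g_λ^{(k)} = (1 − L_{down_{Δ^k(λ)}(z)+1}) g_μ^{(k)} + L_{down_{Δ^k(λ)}(z)} g_λ^{(k)}, where L_w applied to a K-k-Schur function acts on the third argument of its Katalan presentation and L_w := 0 for w > ℓ. -/
import Mathlib


/-!
Common framework: root ideals, Katalan functions, (generalized) K-k-Schur functions,
lowering operators, bounce paths, the sets `Ω`, and (k+1)-cores.
Vectors `γ ∈ ℤ^ℓ` are modelled as functions `ℕ → ℤ`, with the relevant indices `1,…,ℓ`.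
Symmetric-function identities are stated in `MvPolynomial (Fin N) ℚ` for every `N`.
-/

noncomputable section KkSchur

/-- Complete homogeneous symmetric polynomial of degree `d` in `N` variables over `ℚ`. -/
def hsym (N d : ℕ) : MvPolynomial (Fin N) ℚ :=
  ∑ m : Sym (Fin N) d, (m.1.map MvPolynomial.X).prod

/-- The inhomogeneous version `k_m^{(r)} = Σ_{i=0}^m C(r+i-1,i) h_{m-i}` (zero for `m < 0`). -/
def kpoly (N : ℕ) (r : ℕ) (m : ℤ) : MvPolynomial (Fin N) ℚ :=
  if m < 0 then 0
  else ∑ i ∈ Finset.range (m.toNat + 1), ((r + i - 1).choose i : ℚ) • hsym N (m.toNat - i)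

/-- `k_γ = k_{γ₁}^{(0)} ⋯ k_{γ_ℓ}^{(ℓ-1)}`. -/
def kgamma (N ℓ : ℕ) (γ : ℕ → ℤ) : MvPolynomial (Fin N) ℚ :=
  ∏ i ∈ Finset.Icc 1 ℓ, kpoly N (i - 1) (γ i)

/-- `Δ⁺_ℓ = {(i,j) : 1 ≤ i < j ≤ ℓ}`. -/
def DeltaPlus (ℓ : ℕ) : Finset (ℕ × ℕ) :=
  (Finset.Icc 1 ℓ ×ˢ Finset.Icc 1 ℓ).filter fun p => p.1 < p.2

/-- Root ideal: an upper order ideal of `Δ⁺_ℓ` for `(a,b) ≤ (c,d) ↔ a ≥ c ∧ b ≤ d`. -/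
def IsRootIdeal (ℓ : ℕ) (Ψ : Finset (ℕ × ℕ)) : Prop :=
  Ψ ⊆ DeltaPlus ℓ ∧ ∀ p ∈ Ψ, ∀ q ∈ DeltaPlus ℓ, q.1 ≤ p.1 → p.2 ≤ q.2 → q ∈ Ψ

/-- Indicator (as an integer vector) of the interval `[a,b]`. -/
def epsI (a b : ℕ) : ℕ → ℤ := fun t => if a ≤ t ∧ t ≤ b then 1 else 0

/-- Effect of the lowering operators `∏_{z ∈ T} L_z` on the index vector `γ`. -/
def shiftL (T : Multiset ℕ) (γ : ℕ → ℤ) : ℕ → ℤ := fun t => γ t - T.count t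

/-- Effect of the raising operators `∏_{(i,j) ∈ A} R_{ij}` on the index vector `γ`. -/
def shiftR (A : Finset (ℕ × ℕ)) (γ : ℕ → ℤ) : ℕ → ℤ := fun t =>
  γ t + ((A.filter fun p => p.1 = t).card : ℤ) - ((A.filter fun p => p.2 = t).card : ℤ)

/-- The Katalan function `K(Ψ; M; γ) = ∏_{z∈M}(1-L_z) ∏_{(i,j)∈Δ⁺∖Ψ}(1-R_{ij}) k_γ`,
expanded as a signed sum over sub-multisets of `M` and subsets of `Δ⁺_ℓ ∖ Ψ`. -/
def Katalan (N ℓ : ℕ) (Ψ : Finset (ℕ × ℕ)) (M : Multiset ℕ) (γ : ℕ → ℤ) :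
    MvPolynomial (Fin N) ℚ :=
  (M.powerset.map fun T =>
    ((-1 : ℚ) ^ Multiset.card T) •
      ∑ A ∈ (DeltaPlus ℓ \ Ψ).powerset,
        ((-1 : ℚ) ^ A.card) • kgamma N ℓ (shiftR A (shiftL T γ))).sum

/-- The root ideal `Δ^k(μ) = {(i,j) ∈ Δ⁺_ℓ : k - μ_i + i < j}`. -/
def DeltaK (k ℓ : ℕ) (μ : ℕ → ℤ) : Finset (ℕ × ℕ) :=
  (DeltaPlus ℓ).filter fun p => (k : ℤ) - μ p.1 + p.1 < p.2

/-- `L(R)`: the multiset of second components of `R`. -/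
def Lmul (R : Finset (ℕ × ℕ)) : Multiset ℕ := R.val.map Prod.snd

/-- The bottom `b_μ` of the root ideal `Δ^k(μ)` (0 if the root ideal is empty). -/
def bottomB (k ℓ : ℕ) (μ : ℕ → ℤ) : ℕ := (DeltaK k ℓ μ).sup Prod.fst

/-- `(x,j)` is a removable root of `Ψ`. -/
def IsRemovableAt (ℓ : ℕ) (Ψ : Finset (ℕ × ℕ)) (x j : ℕ) : Prop :=
  (x, j) ∈ Ψ ∧ IsRootIdeal ℓ (Ψ.erase (x, j))

open scoped Classical in
/-- `down_Ψ(x)`: the column of the removable root in row `x` (0 if undefined). -/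
def downF (ℓ : ℕ) (Ψ : Finset (ℕ × ℕ)) (x : ℕ) : ℕ :=
  ((Finset.Icc 1 ℓ).filter fun j => IsRemovableAt ℓ Ψ x j).sup id

open scoped Classical in
/-- `up_Ψ(x)`: the row of the removable root in column `x` (0 if undefined). -/
def upF (ℓ : ℕ) (Ψ : Finset (ℕ × ℕ)) (x : ℕ) : ℕ :=
  ((Finset.Icc 1 ℓ).filter fun j => IsRemovableAt ℓ Ψ j x).sup id

/-- `top_Ψ(x)`: the minimum vertex of the bounce path of `Ψ` containing `x`. -/
def topF (ℓ : ℕ) (Ψ : Finset (ℕ × ℕ)) (x : ℕ) : ℕ :=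
  if h : 0 < upF ℓ Ψ x ∧ upF ℓ Ψ x < x then topF ℓ Ψ (upF ℓ Ψ x) else x
termination_by x
decreasing_by exact h.2

/-- Membership in `P̃ℓk`. -/
def memPt (k ℓ : ℕ) (μ : ℕ → ℤ) : Prop :=
  (∀ i ∈ Finset.Icc 1 ℓ, μ i ≤ k) ∧ ∀ i ∈ Finset.Icc 1 (ℓ - 1), μ (i + 1) ≤ μ i + 1

/-- Membership in `Pℓk` (`k`-bounded partitions of length `ℓ`). -/
def memPk (k ℓ : ℕ) (μ : ℕ → ℤ) : Prop :=
  (∀ i ∈ Finset.Icc 1 ℓ, 0 ≤ μ i ∧ μ i ≤ k) ∧ ∀ i ∈ Finset.Icc 1 (ℓ - 1), μ (i + 1) ≤ μ i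

/-- The (generalized) K-k-Schur function `g_μ^{(k)} = K(Δ^k(μ); L(Δ^{k+1}(μ)); μ)`. -/
def gk (N k ℓ : ℕ) (μ : ℕ → ℤ) : MvPolynomial (Fin N) ℚ :=
  Katalan N ℓ (DeltaK k ℓ μ) (Lmul (DeltaK (k + 1) ℓ μ)) μ

/-- `L_w g_μ^{(k)} = K(Δ^k(μ); L(Δ^{k+1}(μ)); μ - ε_w)`, with `L_w = 0` for `w > ℓ`. -/
def Lg (N k ℓ : ℕ) (w : ℕ) (μ : ℕ → ℤ) : MvPolynomial (Fin N) ℚ :=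
  if w ≤ ℓ then
    Katalan N ℓ (DeltaK k ℓ μ) (Lmul (DeltaK (k + 1) ℓ μ))
      (fun t => μ t - if t = w then 1 else 0)
  else 0

open scoped Classical in
/-- `(∏_{w ∈ S} L_w) g_μ^{(k)}`, with the convention `L_w = 0` for `w > ℓ`. -/
def LgM (N k ℓ : ℕ) (S : Multiset ℕ) (μ : ℕ → ℤ) : MvPolynomial (Fin N) ℚ :=
  if ∀ w ∈ S, w ≤ ℓ then
    Katalan N ℓ (DeltaK k ℓ μ) (Lmul (DeltaK (k + 1) ℓ μ)) (fun t => μ t - S.count t)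
  else 0

/-- The chain conditions (10) defining `h_{μ,z}` (Definition 3.4). -/
def hcond (k ℓ : ℕ) (μ : ℕ → ℤ) (z h : ℕ) : Prop :=
  (∀ t, 1 ≤ t → t ≤ h → μ (z + t) = μ z + 1) ∧
  (∀ c, 1 ≤ c → (upF ℓ (DeltaK k ℓ μ))^[c] z ≠ 0 →
    ∀ t ≤ h, μ ((upF ℓ (DeltaK k ℓ μ))^[c] (z + t)) = μ ((upF ℓ (DeltaK k ℓ μ))^[c] z)) ∧
  (∀ t, 1 ≤ t → t ≤ h →
    μ (upF ℓ (DeltaK k ℓ μ) (topF ℓ (DeltaK k ℓ μ) z + t)) =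
      μ (upF ℓ (DeltaK k ℓ μ) (topF ℓ (DeltaK k ℓ μ) z + 1)))

open scoped Classical in
/-- `h_{μ,z}` of Definition 3.4. -/
def hval (k ℓ : ℕ) (μ : ℕ → ℤ) (z : ℕ) : ℕ :=
  if z = ℓ ∨ μ (z + 1) ≤ μ z then 0
  else ((Finset.Icc 1 (ℓ - z)).filter fun h => hcond k ℓ μ z h).sup id

/-- `cover_{z,i}(μ) = μ + ε_{[up(y+1), up(y+i)]} - ε_{[z+1,z+i]}` where `y = top_{Δ^k(μ)}(z)`. -/
def coverzi (k ℓ : ℕ) (μ : ℕ → ℤ) (z i : ℕ) : ℕ → ℤ :=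
  if i = 0 then μ
  else fun t =>
    μ t +
      epsI (upF ℓ (DeltaK k ℓ μ) (topF ℓ (DeltaK k ℓ μ) z + 1))
        (upF ℓ (DeltaK k ℓ μ) (topF ℓ (DeltaK k ℓ μ) z + i)) t -
      epsI (z + 1) (z + i) t

/-- `cover_z(μ) = cover_{z,h_{μ,z}}(μ)`. -/
def coverz (k ℓ : ℕ) (μ : ℕ → ℤ) (z : ℕ) : ℕ → ℤ := coverzi k ℓ μ z (hval k ℓ μ z)

open scoped Classical in
/-- `h′`: the largest `h ∈ [0, ℓ-z]` with `μ_z + 1 = μ_{z+1} = ⋯ = μ_{z+h}`. -/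
def hprime (ℓ : ℕ) (μ : ℕ → ℤ) (z : ℕ) : ℕ :=
  ((Finset.Icc 0 (ℓ - z)).filter fun h => ∀ t, 1 ≤ t → t ≤ h → μ (z + t) = μ z + 1).sup id

/-- `μ_j = μ + σ - ε_{[z+1, z_j]}`, the partial vector in the recursive choice of quadruples. -/
def stepMu (μ σ : ℕ → ℤ) (z zj : ℕ) : ℕ → ℤ := fun t => μ t + σ t - epsI (z + 1) zj t

/-- Valid sequences of quadruples `(z_j, Ψ_j, y_j, i_j)` in the definition of `Ω_{λ,z,d}`:
`ValidSeq k ℓ μ z d σ lo` means `σ` is the accumulated sum of the interval vectors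
`ε_{[up_{Ψ_j}(y_j+1), up_{Ψ_j}(y_j+i_j)]}` and `lo` is the lower bound `z_j + i_j + 1`
for the next choice. -/
inductive ValidSeq (k ℓ : ℕ) (μ : ℕ → ℤ) (z d : ℕ) : (ℕ → ℤ) → ℕ → Prop where
  | nil : ValidSeq k ℓ μ z d (fun _ => 0) z
  | cons (σ : ℕ → ℤ) (lo zj ij : ℕ) :
      ValidSeq k ℓ μ z d σ lo →
      lo ≤ zj → zj + 1 ≤ z + d →
      memPt k ℓ (stepMu μ σ z zj) →
      topF ℓ (DeltaK k ℓ (stepMu μ σ z zj)) (zj + 1) <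
        topF ℓ (DeltaK k ℓ (stepMu μ σ z zj)) zj →
      1 ≤ ij → ij ≤ hval k ℓ (stepMu μ σ z zj) zj → ij ≤ d - zj →
      upF ℓ (DeltaK k ℓ (stepMu μ σ z zj))
          (topF ℓ (DeltaK k ℓ (stepMu μ σ z zj)) zj + ij) < topF ℓ (DeltaK k ℓ μ) z →
      ValidSeq k ℓ μ z d
        (fun t => σ t +
          epsI (upF ℓ (DeltaK k ℓ (stepMu μ σ z zj))
                  (topF ℓ (DeltaK k ℓ (stepMu μ σ z zj)) zj + 1))
               (upF ℓ (DeltaK k ℓ (stepMu μ σ z zj))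
                  (topF ℓ (DeltaK k ℓ (stepMu μ σ z zj)) zj + ij)) t)
        (zj + ij + 1)

/-- Membership in `Ω_{λ,z,d}`. -/
def OmegaMem (k ℓ : ℕ) (lam : ℕ → ℤ) (z d : ℕ) (ν : ℕ → ℤ) : Prop :=
  ∃ σ lo, ValidSeq k ℓ (fun t => lam t - if t = z then 1 else 0) z d σ lo ∧
    memPt k ℓ ν ∧
    ν = fun t => (lam t - if t = z then 1 else 0) + σ t - epsI (z + 1) (z + d) t

/-- Membership in `Ω_{λ,z} = Ω_{λ,z,h′}`. -/
def OmegaZ (k ℓ : ℕ) (lam : ℕ → ℤ) (z : ℕ) (ν : ℕ → ℤ) : Prop :=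
  OmegaMem k ℓ lam z (hprime ℓ (fun t => lam t - if t = z then 1 else 0) z) ν

/-- Membership in `Ω_{λ,{z}ⁿ}` (iterated `Ω_{·,z}`). -/
def OmegaPow (k ℓ z : ℕ) : ℕ → (ℕ → ℤ) → (ℕ → ℤ) → Prop
  | 0, lam, ν => ν = lam
  | n + 1, lam, ν => ∃ ν', OmegaZ k ℓ lam z ν' ∧ OmegaPow k ℓ z n ν' ν

/-- `D_{Δ^k(λ)} = {down_{Δ^k(λ)}(z) : z ∈ [b_λ]}`. -/
def Dset (k ℓ : ℕ) (lam : ℕ → ℤ) : Finset ℕ :=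
  (Finset.Icc 1 (bottomB k ℓ lam)).image fun z => downF ℓ (DeltaK k ℓ lam) z

/-- `[ℓ]_λ = [ℓ] ∖ D_{Δ^k(λ)}`. -/
def ellSet (k ℓ : ℕ) (lam : ℕ → ℤ) : Finset ℕ := Finset.Icc 1 ℓ \ Dset k ℓ lam

/-- Partitions as weakly decreasing, eventually zero functions on `{1,2,…}`. -/
def IsPartF (κ : ℕ → ℕ) : Prop :=
  (∀ i, 1 ≤ i → κ (i + 1) ≤ κ i) ∧ ∃ n, ∀ i, n < i → κ i = 0

/-- Hook length of the cell `(i,j)` of the partition `κ`. -/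
def hookLen (κ : ℕ → ℕ) (i j : ℕ) : ℕ :=
  (κ i + 1 - j) + Set.ncard {r : ℕ | i < r ∧ j ≤ κ r}

/-- `κ` is a `c`-core. -/
def IsCore (c : ℕ) (κ : ℕ → ℕ) : Prop :=
  IsPartF κ ∧ ∀ i j, 1 ≤ i → 1 ≤ j → j ≤ κ i → hookLen κ i j ≠ c

/-- The bijection `𝔭` from `(k+1)`-cores to `k`-bounded partitions:
`𝔭(κ)_i` counts the cells of row `i` of `κ` with hook length at most `k`. -/
def pCore (k : ℕ) (κ : ℕ → ℕ) (i : ℕ) : ℕ :=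
  Set.ncard {j : ℕ | 1 ≤ j ∧ j ≤ κ i ∧ hookLen κ i j ≤ k}

/-- `κ` is the `(k+1)`-core `𝔠(μ)` of the `k`-bounded partition `μ` of length `≤ ℓ`. -/
def IsCoreOf (k ℓ : ℕ) (κ : ℕ → ℕ) (μ : ℕ → ℤ) : Prop :=
  IsCore (k + 1) κ ∧ ∀ i, 1 ≤ i → (pCore k κ i : ℤ) = if i ≤ ℓ then μ i else 0

/-- `𝔠(μ) ⊆ 𝔠(λ)`, i.e. `w_μ ≤ w_λ` in Bruhat order. -/
def coreLE (k ℓ : ℕ) (μ lam : ℕ → ℤ) : Prop :=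
  ∃ κ1 κ2, IsCoreOf k ℓ κ1 μ ∧ IsCoreOf k ℓ κ2 lam ∧ ∀ i, κ1 i ≤ κ2 i

/-- `𝔠(μ) ⊊ 𝔠(λ)`, i.e. `w_μ < w_λ` in Bruhat order. -/
def coreLT (k ℓ : ℕ) (μ lam : ℕ → ℤ) : Prop :=
  ∃ κ1 κ2, IsCoreOf k ℓ κ1 μ ∧ IsCoreOf k ℓ κ2 lam ∧ (∀ i, κ1 i ≤ κ2 i) ∧ κ1 ≠ κ2



section AuxKK

lemma mem_DeltaPlus {ℓ : ℕ} {p : ℕ × ℕ} :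
    p ∈ DeltaPlus ℓ ↔ 1 ≤ p.1 ∧ p.1 < p.2 ∧ p.2 ≤ ℓ := by
  simp only [DeltaPlus, Finset.mem_filter, Finset.mem_product, Finset.mem_Icc]
  omega

lemma mem_DeltaK {k ℓ : ℕ} {μ : ℕ → ℤ} {p : ℕ × ℕ} :
    p ∈ DeltaK k ℓ μ ↔ (1 ≤ p.1 ∧ p.1 < p.2 ∧ p.2 ≤ ℓ) ∧ (k : ℤ) - μ p.1 + p.1 < p.2 := by
  simp only [DeltaK, Finset.mem_filter, mem_DeltaPlus]

lemma shiftL_cons (a : ℕ) (T : Multiset ℕ) (γ : ℕ → ℤ) :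
    shiftL (a ::ₘ T) γ = shiftL T (fun t => γ t - if t = a then 1 else 0) := by
  funext t
  simp only [shiftL, Multiset.count_cons]
  split_ifs <;> push_cast <;> ring

lemma shiftL_addfun (T : Multiset ℕ) (γ δ : ℕ → ℤ) :
    shiftL T (fun t => γ t + δ t) = fun t => shiftL T γ t + δ t := by
  funext t; simp only [shiftL]; ring

lemma shiftR_insert (x j : ℕ) (A : Finset (ℕ × ℕ)) (hα : (x, j) ∉ A) (γ : ℕ → ℤ) :
    shiftR (insert (x, j) A) γ =
      shiftR A (fun t => γ t + ((if t = x then 1 else 0) - (if t = j then 1 else 0))) := by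
  classical
  funext t
  have c1 : ((insert (x, j) A).filter fun p => p.1 = t).card
      = (A.filter fun p => p.1 = t).card + (if t = x then 1 else 0) := by
    rw [Finset.filter_insert]
    by_cases e : x = t
    · have e1 : (x, j).1 = t := e
      rw [if_pos e1, if_pos e.symm,
        Finset.card_insert_of_notMem (fun hh => hα (Finset.mem_filter.mp hh).1)]
    · have e1 : ¬((x, j).1 = t) := e
      rw [if_neg e1, if_neg (fun hh : t = x => e hh.symm), add_zero]
  have c2 : ((insert (x, j) A).filter fun p => p.2 = t).card
      = (A.filter fun p => p.2 = t).card + (if t = j then 1 else 0) := by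
    rw [Finset.filter_insert]
    by_cases e : j = t
    · have e1 : (x, j).2 = t := e
      rw [if_pos e1, if_pos e.symm,
        Finset.card_insert_of_notMem (fun hh => hα (Finset.mem_filter.mp hh).1)]
    · have e1 : ¬((x, j).2 = t) := e
      rw [if_neg e1, if_neg (fun hh : t = j => e hh.symm), add_zero]
  simp only [shiftR, c1, c2]
  push_cast
  ring

lemma katalan_cons (N ℓ : ℕ) (Ψ : Finset (ℕ × ℕ)) (a : ℕ) (M : Multiset ℕ) (γ : ℕ → ℤ) :
    Katalan N ℓ Ψ (a ::ₘ M) γ =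
      Katalan N ℓ Ψ M γ - Katalan N ℓ Ψ M (fun t => γ t - if t = a then 1 else 0) := by
  classical
  unfold Katalan
  rw [Multiset.powerset_cons, Multiset.map_add, Multiset.sum_add, Multiset.map_map,
    sub_eq_add_neg]
  congr 1
  rw [← Multiset.sum_map_neg]
  apply congrArg Multiset.sum
  apply Multiset.map_congr rfl
  intro T hT
  simp only [Function.comp_apply, Multiset.card_cons, shiftL_cons, pow_succ, mul_neg_one,
    neg_smul]

lemma katalan_erase (N ℓ : ℕ) (Ψ : Finset (ℕ × ℕ)) (M : Multiset ℕ) (γ : ℕ → ℤ)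
    (x j : ℕ) (hΔ : (x, j) ∈ DeltaPlus ℓ) (hΨ : (x, j) ∈ Ψ) :
    Katalan N ℓ (Ψ.erase (x, j)) M γ =
      Katalan N ℓ Ψ M γ -
      Katalan N ℓ Ψ M
        (fun t => γ t + ((if t = x then 1 else 0) - (if t = j then 1 else 0))) := by
  classical
  have hset : DeltaPlus ℓ \ Ψ.erase (x, j) = insert (x, j) (DeltaPlus ℓ \ Ψ) := by
    ext p
    simp only [Finset.mem_sdiff, Finset.mem_erase, Finset.mem_insert, not_and_or, not_not]
    constructor
    · rintro ⟨hp, h | h⟩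
      · left; simpa using h
      · right; exact ⟨hp, h⟩
    · rintro (rfl | ⟨ha, hb⟩)
      · exact ⟨hΔ, Or.inl rfl⟩
      · exact ⟨ha, Or.inr hb⟩
  have hα : (x, j) ∉ DeltaPlus ℓ \ Ψ := by simp [hΨ]
  unfold Katalan
  rw [hset, ← Multiset.sum_map_sub]
  apply congrArg Multiset.sum
  apply Multiset.map_congr rfl
  intro T hT
  rw [← smul_sub, ← Finset.sum_sub_distrib]
  apply congrArg
  rw [Finset.sum_powerset_insert hα]
  have key : ∀ A ∈ (DeltaPlus ℓ \ Ψ).powerset,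
      ((-1 : ℚ) ^ (insert (x, j) A).card) • kgamma N ℓ (shiftR (insert (x, j) A) (shiftL T γ)) =
      -(((-1 : ℚ) ^ A.card) • kgamma N ℓ (shiftR A (shiftL T
        (fun t => γ t + ((if t = x then 1 else 0) - (if t = j then 1 else 0)))))) := by
    intro A hA
    have hαA : (x, j) ∉ A := fun h => hα (Finset.mem_powerset.mp hA h)
    rw [Finset.card_insert_of_notMem hαA, shiftR_insert x j A hαA, shiftL_addfun,
      pow_succ, mul_neg_one, neg_smul]
  rw [Finset.sum_congr rfl key, Finset.sum_neg_distrib, Finset.sum_sub_distrib]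
  ring

end AuxKK

/-- Proposition 3.9: for `λ ∈ Pℓk`, `z ∈ [b_λ]` and `μ = λ - ε_z`,
`L_z g_λ^{(k)} = (1 - L_{down(z)+1}) g_μ^{(k)} + L_{down(z)} g_λ^{(k)}`. -/
theorem stmt7 (k ℓ : ℕ) (hℓ : 1 ≤ ℓ) (lam : ℕ → ℤ) (hlam : memPk k ℓ lam)
    (z : ℕ) (hz1 : 1 ≤ z) (hz2 : z ≤ bottomB k ℓ lam) (N : ℕ) :
    Lg N k ℓ z lam =
      (gk N k ℓ (fun t => lam t - if t = z then 1 else 0) -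
        Lg N k ℓ (downF ℓ (DeltaK k ℓ lam) z + 1)
          (fun t => lam t - if t = z then 1 else 0)) +
      Lg N k ℓ (downF ℓ (DeltaK k ℓ lam) z) lam := by
  classical
  obtain ⟨h1, h2⟩ := hlam
  have lam_anti : ∀ i j : ℕ, 1 ≤ i → i ≤ j → j ≤ ℓ → lam j ≤ lam i := by
    intro i j hi hij hjl
    induction j with
    | zero => omega
    | succ n ih =>
      rcases Nat.eq_or_lt_of_le hij with h | h
      · exact le_of_eq (congrArg lam h.symm)
      · have hn : i ≤ n := by omega
        have hA := ih hn (by omega)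
        have hB := h2 n (Finset.mem_Icc.mpr ⟨by omega, by omega⟩)
        linarith
  -- the bottom row is nonempty: get a maximal-row root
  have hne : (DeltaK k ℓ lam).Nonempty := by
    rcases Finset.eq_empty_or_nonempty (DeltaK k ℓ lam) with h | h
    · exfalso
      have : bottomB k ℓ lam = 0 := by
        unfold bottomB; rw [h, Finset.sup_empty]; rfl
      omega
    · exact h
  obtain ⟨p, hp, hsup⟩ := Finset.exists_mem_eq_sup (DeltaK k ℓ lam) hne Prod.fst
  have hB : bottomB k ℓ lam = p.1 := hsup
  have hzp : z ≤ p.1 := by omega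
  obtain ⟨⟨hp1, hp2, hp3⟩, hpc⟩ := mem_DeltaK.mp hp
  have hzℓ : z < ℓ := by omega
  obtain ⟨hlz0, hlzk⟩ := h1 z (Finset.mem_Icc.mpr ⟨hz1, by omega⟩)
  have hble : lam p.1 ≤ lam z := lam_anti z p.1 hz1 hzp (by omega)
  -- the removable column d in row z
  set d : ℕ := k - (lam z).toNat + z + 1 with hddef
  have htn : ((lam z).toNat : ℤ) = lam z := Int.toNat_of_nonneg hlz0
  have hdz : (d : ℤ) = (k : ℤ) - lam z + z + 1 := by
    have h0 : (lam z).toNat ≤ k := by omega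
    omega
  have hdℓ : d ≤ ℓ := by omega
  have hzd : z < d := by omega
  -- `DeltaK k ℓ lam` is a root ideal
  have hIdeal : IsRootIdeal ℓ (DeltaK k ℓ lam) := by
    constructor
    · exact Finset.filter_subset _ _
    · intro q hq r hrΔ hr1 hr2
      obtain ⟨⟨hq1, hq2, hq3⟩, hqc⟩ := mem_DeltaK.mp hq
      obtain ⟨hr1', hr2', hr3'⟩ := mem_DeltaPlus.mp hrΔ
      have hlr : lam q.1 ≤ lam r.1 := lam_anti r.1 q.1 hr1' hr1 (by omega)
      exact mem_DeltaK.mpr ⟨⟨hr1', hr2', hr3'⟩, by omega⟩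
  have hmemzd : (z, d) ∈ DeltaK k ℓ lam :=
    mem_DeltaK.mpr ⟨⟨hz1, hzd, hdℓ⟩, show (k : ℤ) - lam z + (z : ℤ) < (d : ℤ) by omega⟩
  have hΔzd : (z, d) ∈ DeltaPlus ℓ := mem_DeltaPlus.mpr ⟨hz1, hzd, hdℓ⟩
  -- (z,d) is removable
  have hrem : IsRemovableAt ℓ (DeltaK k ℓ lam) z d := by
    refine ⟨hmemzd, Finset.Subset.trans (Finset.erase_subset _ _) hIdeal.1, ?_⟩
    intro q hq r hrΔ hr1 hr2
    have hqΨ : q ∈ DeltaK k ℓ lam := Finset.mem_of_mem_erase hq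
    have hrΨ : r ∈ DeltaK k ℓ lam := hIdeal.2 q hqΨ r hrΔ hr1 hr2
    refine Finset.mem_erase.mpr ⟨?_, hrΨ⟩
    rintro rfl
    have hq1' : z ≤ q.1 := hr1
    have hq2' : q.2 ≤ d := hr2
    obtain ⟨⟨hqa, hqb, hqc'⟩, hqc⟩ := mem_DeltaK.mp hqΨ
    have hlq : lam q.1 ≤ lam z := lam_anti z q.1 hz1 hq1' (by omega)
    have hqne := (Finset.mem_erase.mp hq).1
    apply hqne
    have heq : q.1 = z ∧ q.2 = d := by omega
    exact Prod.ext heq.1 heq.2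
  -- uniqueness of the removable column in row z
  have huniq : ∀ j, IsRemovableAt ℓ (DeltaK k ℓ lam) z j → j = d := by
    intro j hj
    obtain ⟨hjΨ, hjsub, hjprop⟩ := hj
    obtain ⟨⟨hja, hjb, hjc'⟩, hjc⟩ := mem_DeltaK.mp hjΨ
    have hjc2 : (k : ℤ) - lam z + z < j := hjc
    have hdj : d ≤ j := by omega
    rcases Nat.eq_or_lt_of_le hdj with h | h
    · exact h.symm
    · exfalso
      have hzdmem : (z, d) ∈ (DeltaK k ℓ lam).erase (z, j) := by
        refine Finset.mem_erase.mpr ⟨?_, hmemzd⟩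
        intro hcon
        have : d = j := congrArg Prod.snd hcon
        omega
      have hfin := hjprop (z, d) hzdmem (z, j) (hIdeal.1 hjΨ) le_rfl (le_of_lt h)
      exact (Finset.mem_erase.mp hfin).1 rfl
  -- compute downF
  have hdown : downF ℓ (DeltaK k ℓ lam) z = d := by
    unfold downF
    have hfil : ((Finset.Icc 1 ℓ).filter fun j => IsRemovableAt ℓ (DeltaK k ℓ lam) z j)
        = {d} := by
      ext j
      simp only [Finset.mem_filter, Finset.mem_Icc, Finset.mem_singleton]
      constructor
      · rintro ⟨_, hj⟩; exact huniq j hj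
      · rintro rfl; exact ⟨⟨by omega, hdℓ⟩, hrem⟩
    rw [hfil, Finset.sup_singleton]
    rfl
  set μ : ℕ → ℤ := fun t => lam t - if t = z then 1 else 0 with hμdef
  have hμ1 : ∀ t, μ t = lam t - if t = z then 1 else 0 := fun t => rfl
  -- `Δ^k(μ) = Δ^k(λ) \ {(z,d)}`
  have hΨμ : DeltaK k ℓ μ = (DeltaK k ℓ lam).erase (z, d) := by
    ext q
    rw [Finset.mem_erase, mem_DeltaK, mem_DeltaK, hμ1]
    constructor
    · rintro ⟨hΔ', hcμ⟩
      by_cases hqz : q.1 = z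
      · rw [if_pos hqz] at hcμ
        have hlamq : lam q.1 = lam z := by rw [hqz]
        refine ⟨fun hcon => ?_, hΔ', by omega⟩
        have hb : q.2 = d := congrArg Prod.snd hcon
        omega
      · rw [if_neg hqz, sub_zero] at hcμ
        exact ⟨fun hcon => hqz (congrArg Prod.fst hcon), hΔ', by omega⟩
    · rintro ⟨hnd, hΔ', hc⟩
      refine ⟨hΔ', ?_⟩
      by_cases hqz : q.1 = z
      · rw [if_pos hqz]
        have hlamq : lam q.1 = lam z := by rw [hqz]
        have hq2d : q.2 ≠ d := fun hcon => hnd (Prod.ext hqz hcon)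
        omega
      · rw [if_neg hqz, sub_zero]; omega
  -- case split on whether d = ℓ
  rcases Nat.eq_or_lt_of_le hdℓ with hcase | hcase
  · -- d = ℓ : here `Δ^{k+1}(μ) = Δ^{k+1}(λ)` and `L_{d+1} = 0`
    have hk1 : DeltaK (k + 1) ℓ μ = DeltaK (k + 1) ℓ lam := by
      ext q
      rw [mem_DeltaK, mem_DeltaK, hμ1]
      by_cases hqz : q.1 = z
      · rw [if_pos hqz]
        have hlamq : lam q.1 = lam z := by rw [hqz]
        constructor
        · rintro ⟨hΔ', hc⟩
          exact ⟨hΔ', by omega⟩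
        · rintro ⟨⟨ha, hb, hc'⟩, hc⟩
          exfalso
          have : ((k : ℤ) + 1) - lam q.1 + q.1 < q.2 := by push_cast at hc; omega
          omega
      · rw [if_neg hqz, sub_zero]
    rw [hdown]
    simp only [Lg, gk, ← hμdef]
    rw [if_pos (show z ≤ ℓ by omega), if_neg (show ¬ (d + 1 ≤ ℓ) by omega),
      if_pos (show d ≤ ℓ from hdℓ)]
    rw [hk1, hΨμ]
    rw [katalan_erase N ℓ (DeltaK k ℓ lam) (Lmul (DeltaK (k + 1) ℓ lam)) μ z d hΔzd hmemzd]
    have hfun : (fun t => μ t + ((if t = z then (1 : ℤ) else 0) - (if t = d then 1 else 0)))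
        = fun t => lam t - if t = d then 1 else 0 := by
      funext t; rw [hμ1]; ring
    rw [hfun]
    ring
  · -- d < ℓ
    have hmem1 : (z, d + 1) ∈ DeltaK (k + 1) ℓ lam :=
      mem_DeltaK.mpr ⟨⟨hz1, by omega, by omega⟩,
        show (((k + 1 : ℕ)) : ℤ) - lam z + (z : ℤ) < (((d + 1 : ℕ)) : ℤ) by push_cast; omega⟩
    have hk1 : DeltaK (k + 1) ℓ μ = (DeltaK (k + 1) ℓ lam).erase (z, d + 1) := by
      ext q
      rw [Finset.mem_erase, mem_DeltaK, mem_DeltaK, hμ1]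
      constructor
      · rintro ⟨hΔ', hcμ⟩
        by_cases hqz : q.1 = z
        · rw [if_pos hqz] at hcμ
          have hlamq : lam q.1 = lam z := by rw [hqz]
          push_cast at hcμ
          refine ⟨fun hcon => ?_, hΔ', by push_cast; omega⟩
          have hb : q.2 = d + 1 := congrArg Prod.snd hcon
          omega
        · rw [if_neg hqz, sub_zero] at hcμ
          exact ⟨fun hcon => hqz (congrArg Prod.fst hcon), hΔ', by omega⟩
      · rintro ⟨hnd, hΔ', hc⟩
        refine ⟨hΔ', ?_⟩
        by_cases hqz : q.1 = z
        · rw [if_pos hqz]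
          have hlamq : lam q.1 = lam z := by rw [hqz]
          have hq2d : q.2 ≠ d + 1 := fun hcon => hnd (Prod.ext hqz hcon)
          push_cast at hc ⊢
          omega
        · rw [if_neg hqz, sub_zero]; omega
    have hM : Lmul (DeltaK (k + 1) ℓ lam) = (d + 1) ::ₘ Lmul (DeltaK (k + 1) ℓ μ) := by
      rw [hk1]
      unfold Lmul
      rw [Finset.erase_val]
      conv_lhs => rw [← Multiset.cons_erase (show ((z, d + 1) : ℕ × ℕ) ∈
        (DeltaK (k + 1) ℓ lam).val from hmem1), Multiset.map_cons]
    rw [hdown]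
    simp only [Lg, gk, ← hμdef]
    rw [if_pos (show z ≤ ℓ by omega), if_pos (show d + 1 ≤ ℓ by omega),
      if_pos (show d ≤ ℓ from hdℓ)]
    have e1 : Katalan N ℓ (DeltaK k ℓ μ) (Lmul (DeltaK (k + 1) ℓ lam)) μ
        = Katalan N ℓ (DeltaK k ℓ μ) (Lmul (DeltaK (k + 1) ℓ μ)) μ
          - Katalan N ℓ (DeltaK k ℓ μ) (Lmul (DeltaK (k + 1) ℓ μ))
              (fun t => μ t - if t = d + 1 then 1 else 0) := by
      rw [hM]
      exact katalan_cons N ℓ (DeltaK k ℓ μ) (d + 1) (Lmul (DeltaK (k + 1) ℓ μ)) μ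
    have e2 : Katalan N ℓ (DeltaK k ℓ μ) (Lmul (DeltaK (k + 1) ℓ lam)) μ
        = Katalan N ℓ (DeltaK k ℓ lam) (Lmul (DeltaK (k + 1) ℓ lam)) μ
          - Katalan N ℓ (DeltaK k ℓ lam) (Lmul (DeltaK (k + 1) ℓ lam))
              (fun t => lam t - if t = d then 1 else 0) := by
      rw [hΨμ]
      rw [katalan_erase N ℓ (DeltaK k ℓ lam) (Lmul (DeltaK (k + 1) ℓ lam)) μ z d hΔzd hmemzd]
      have hfun : (fun t => μ t + ((if t = z then (1 : ℤ) else 0) - (if t = d then 1 else 0)))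
          = fun t => lam t - if t = d then 1 else 0 := by
        funext t; rw [hμ1]; ring
      rw [hfun]
    rw [← e1, e2]
    ring

end KkSchur
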